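/- For all real numbers a, b, x with a ≥ b ≥ 0 and x ≥ 0, one has 1 − a·x ≤ (1 + b·x)·exp(−(a+b)·x). -/

import Mathlib

open Real Set

lemma aux_anti : AntitoneOn (fun u : ℝ => (1 + u) * Real.exp (-u)) (Set.Ici 0) := by
  apply antitoneOn_of_deriv_nonpos (convex_Ici 0)
  · fun_prop
  · apply Differentiable.differentiableOn; fun_prop
  · intro u hu
    have h1 : HasDerivAt (fun u : ℝ => (1 + u)) 1 u := by
      simpa using (hasDerivAt_id u).const_add 1
    have h2 : HasDerivAt (fun u : ℝ => Real.exp (-u)) (-Real.exp (-u)) u := by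
      simpa [Function.comp_def] using (Real.hasDerivAt_exp (-u)).comp u (hasDerivAt_neg u)
    have h3 : HasDerivAt (fun u : ℝ => (1 + u) * Real.exp (-u))
        (1 * Real.exp (-u) + (1 + u) * (-Real.exp (-u))) u := h1.mul h2
    rw [h3.deriv]
    have hu' : 0 < u := by simpa using hu
    nlinarith [Real.exp_pos (-u), hu'.le]

lemma aux_key (t : ℝ) (ht : 0 ≤ t) : 1 - t ≤ (1 + t) * Real.exp (-2 * t) := by
  have hmono : MonotoneOn (fun u : ℝ => (1 + u) * Real.exp (-2 * u) + u) (Set.Ici 0) := by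
    apply monotoneOn_of_deriv_nonneg (convex_Ici 0)
    · fun_prop
    · apply Differentiable.differentiableOn; fun_prop
    · intro u hu
      have h1 : HasDerivAt (fun u : ℝ => (1 + u)) 1 u := by
        simpa using (hasDerivAt_id u).const_add 1
      have h2 : HasDerivAt (fun u : ℝ => Real.exp (-2 * u)) (-2 * Real.exp (-2 * u)) u := by
        have := ((hasDerivAt_id u).const_mul (-2 : ℝ)).exp
        simpa [mul_comm] using this
      have h3 : HasDerivAt (fun u : ℝ => (1 + u) * Real.exp (-2 * u) + u)
          (1 * Real.exp (-2 * u) + (1 + u) * (-2 * Real.exp (-2 * u)) + 1) u :=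
        (h1.mul h2).add (hasDerivAt_id u)
      rw [h3.deriv]
      have hexp : 2 * u + 1 ≤ Real.exp (2 * u) := Real.add_one_le_exp _
      have hprod : Real.exp (-2 * u) * Real.exp (2 * u) = 1 := by
        rw [← Real.exp_add]; norm_num
      have hu' : 0 < u := by simpa using hu
      nlinarith [Real.exp_pos (-2 * u), Real.exp_pos (2 * u)]
  have h0 : (0 : ℝ) ∈ Set.Ici (0 : ℝ) := Set.mem_Ici.mpr le_rfl
  have ht' : t ∈ Set.Ici (0 : ℝ) := ht
  have := hmono h0 ht' ht
  simp only [add_zero, mul_zero, neg_zero, Real.exp_zero, mul_one, zero_add] at this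
  -- this : 1 * 1 + 0 ≤ (1+t) * exp(-2*t) + t ... check form
  nlinarith [this]

/-- Appendix B.1: for a ≥ b ≥ 0 and x ≥ 0, 1 − a·x ≤ (1 + b·x)·e^{−(a+b)x}. -/
theorem one_sub_ax_le (a b x : ℝ) (hab : a ≥ b) (hb : b ≥ 0) (hx : x ≥ 0) :
    1 - a * x ≤ (1 + b * x) * Real.exp (-(a + b) * x) := by
  set s := b * x with hs
  set t := a * x with htdef
  have hs0 : 0 ≤ s := mul_nonneg hb hx
  have ht0 : 0 ≤ t := mul_nonneg (hb.trans hab) hx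
  have hst : s ≤ t := mul_le_mul_of_nonneg_right hab hx
  have hrw : -(a + b) * x = -s + -t := by ring
  rw [hrw, Real.exp_add, ← mul_assoc]
  have h1 : (1 + t) * Real.exp (-t) ≤ (1 + s) * Real.exp (-s) :=
    aux_anti (mem_Ici.mpr hs0) (mem_Ici.mpr ht0) hst
  have h2 : (1 + t) * Real.exp (-t) * Real.exp (-t) ≤ (1 + s) * Real.exp (-s) * Real.exp (-t) :=
    mul_le_mul_of_nonneg_right h1 (Real.exp_pos _).le
  have h3 : 1 - t ≤ (1 + t) * Real.exp (-2 * t) := aux_key t ht0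
  have heq : (1 + t) * Real.exp (-t) * Real.exp (-t) = (1 + t) * Real.exp (-2 * t) := by
    rw [mul_assoc, ← Real.exp_add]; ring_nf
  linarith [heq ▸ h2]
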